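/- Let ζ ∈ (0,1) and n ∈ ℕ. For every z ∈ ℂ with |z| < 1 one has Q_n(z) ≠ 0 and τ_z^{(n)}(1) = P_n(z)/Q_n(z). -/

import Mathlib

/-- `h ζ w = ((ζ + w)/(1 + ζ w))^2`. -/
noncomputable def hmap (ζ : ℝ) (w : ℂ) : ℂ := (((ζ : ℂ) + w) / (1 + (ζ : ℂ) * w)) ^ 2

/-- The `n`-th iterate `τ_z^{(n)}(1)` of `u ↦ h(z·u)` starting from `1`. -/
noncomputable def tauIter (ζ : ℝ) (z : ℂ) : ℕ → ℂ
  | 0 => 1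
  | n + 1 => hmap ζ (z * tauIter ζ z n)

/-- The pair `(P_n, Q_n)` of polynomials defined by `P_0 = Q_0 = 1`,
`P_{n+1} = (ζ Q_n + X P_n)²`, `Q_{n+1} = (Q_n + ζ X P_n)²`. -/
noncomputable def PQ (ζ : ℝ) : ℕ → Polynomial ℂ × Polynomial ℂ
  | 0 => (1, 1)
  | n + 1 =>
    (((ζ : ℂ) • (PQ ζ n).2 + Polynomial.X * (PQ ζ n).1) ^ 2,
     ((PQ ζ n).2 + (ζ : ℂ) • (Polynomial.X * (PQ ζ n).1)) ^ 2)

noncomputable def Ppoly (ζ : ℝ) (n : ℕ) : Polynomial ℂ := (PQ ζ n).1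

noncomputable def Qpoly (ζ : ℝ) (n : ℕ) : Polynomial ℂ := (PQ ζ n).2

lemma aux_ne (ζ : ℝ) (hζ0 : 0 < ζ) (hζ1 : ζ < 1) (w : ℂ) (hw : ‖w‖ < 1) :
    (1 + (ζ : ℂ) * w) ≠ 0 := by
  intro h
  have : ‖(ζ : ℂ) * w‖ = ζ * ‖w‖ := by
    simp [norm_mul, abs_of_pos hζ0]
  have h1 : ‖(ζ : ℂ) * w‖ < 1 := by
    rw [this]
    nlinarith [norm_nonneg w]
  have h2 : (ζ : ℂ) * w = -1 := by linear_combination h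
  rw [h2] at h1
  simp at h1

lemma aux_le (ζ : ℝ) (hζ0 : 0 < ζ) (hζ1 : ζ < 1) (w : ℂ) (hw : ‖w‖ < 1) :
    ‖((ζ : ℂ) + w) / (1 + (ζ : ℂ) * w)‖ ≤ 1 := by
  have hne := aux_ne ζ hζ0 hζ1 w hw
  rw [norm_div, div_le_one (norm_pos_iff.mpr hne)]
  have h1 : Complex.normSq ((ζ : ℂ) + w) ≤ Complex.normSq (1 + (ζ : ℂ) * w) := by
    simp only [Complex.normSq_apply, Complex.add_re, Complex.add_im, Complex.mul_re,
      Complex.mul_im, Complex.one_re, Complex.one_im, Complex.ofReal_re, Complex.ofReal_im]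
    have hns : w.re ^ 2 + w.im ^ 2 < 1 := by
      have h2 := Complex.sq_norm w
      simp only [Complex.normSq_apply] at h2
      nlinarith [norm_nonneg w]
    nlinarith [mul_pos (show (0:ℝ) < 1 - ζ ^ 2 by nlinarith)
      (show (0:ℝ) < 1 - (w.re ^ 2 + w.im ^ 2) by linarith)]
  calc ‖(ζ : ℂ) + w‖ = Real.sqrt (Complex.normSq ((ζ : ℂ) + w)) := rfl
    _ ≤ Real.sqrt (Complex.normSq (1 + (ζ : ℂ) * w)) := Real.sqrt_le_sqrt h1
    _ = ‖1 + (ζ : ℂ) * w‖ := rfl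

/-- On the open unit disk, `Q_n(z) ≠ 0` and `τ_z^{(n)}(1) = P_n(z)/Q_n(z)`. -/
theorem stmt5 (ζ : ℝ) (hζ0 : 0 < ζ) (hζ1 : ζ < 1) (n : ℕ)
    (z : ℂ) (hz : ‖z‖ < 1) :
    (Qpoly ζ n).eval z ≠ 0 ∧
    tauIter ζ z n = (Ppoly ζ n).eval z / (Qpoly ζ n).eval z := by
  suffices H : ∀ m : ℕ, (Qpoly ζ m).eval z ≠ 0 ∧
      tauIter ζ z m = (Ppoly ζ m).eval z / (Qpoly ζ m).eval z ∧
      ‖tauIter ζ z m‖ ≤ 1 by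
    exact ⟨(H n).1, (H n).2.1⟩
  intro m
  induction m with
  | zero => simp [Qpoly, Ppoly, PQ, tauIter]
  | succ m ih =>
    obtain ⟨hQ, hτ, habs⟩ := ih
    set w : ℂ := z * tauIter ζ z m with hw
    have hwabs : ‖w‖ < 1 := by
      rw [hw, norm_mul]
      calc ‖z‖ * ‖tauIter ζ z m‖ ≤ ‖z‖ * 1 :=
            mul_le_mul_of_nonneg_left habs (norm_nonneg z)
        _ < 1 := by simpa using hz
    have hne := aux_ne ζ hζ0 hζ1 w hwabs
    have hle := aux_le ζ hζ0 hζ1 w hwabs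
    have hden : (Qpoly ζ (m + 1)).eval z =
        ((Qpoly ζ m).eval z * (1 + (ζ : ℂ) * w)) ^ 2 := by
      simp only [Qpoly, Ppoly, PQ, Polynomial.eval_pow, Polynomial.eval_add,
        Polynomial.eval_smul, Polynomial.eval_mul, Polynomial.eval_X, smul_eq_mul]
      simp only [Ppoly, Qpoly] at hτ hQ ⊢
      rw [hw, hτ]
      field_simp
    have hQne : (Qpoly ζ (m + 1)).eval z ≠ 0 := by
      rw [hden]
      exact pow_ne_zero 2 (mul_ne_zero hQ hne)
    have hnum : (Ppoly ζ (m + 1)).eval z =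
        ((Qpoly ζ m).eval z * ((ζ : ℂ) + w)) ^ 2 := by
      simp only [Qpoly, Ppoly, PQ, Polynomial.eval_pow, Polynomial.eval_add,
        Polynomial.eval_smul, Polynomial.eval_mul, Polynomial.eval_X, smul_eq_mul]
      simp only [Ppoly, Qpoly] at hτ hQ ⊢
      rw [hw, hτ]
      field_simp
    have hτs : tauIter ζ z (m + 1) = (((ζ : ℂ) + w) / (1 + (ζ : ℂ) * w)) ^ 2 := rfl
    refine ⟨hQne, ?_, ?_⟩
    · rw [hτs, hnum, hden]
      rw [div_pow, mul_pow, mul_pow]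
      rw [mul_div_mul_left _ _ (pow_ne_zero 2 hQ)]
    · rw [hτs, norm_pow]
      calc ‖((ζ : ℂ) + w) / (1 + (ζ : ℂ) * w)‖ ^ 2 ≤ 1 ^ 2 := by
            exact pow_le_pow_left₀ (norm_nonneg _) hle 2
        _ = 1 := one_pow 2
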